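/- Let m ≥ 3 and let Ω be the set of partitions of {1,...,2m} into 2 blocks of size m, with S_{2m} acting naturally. Fix α ∈ Ω. Then the nontrivial orbits of the stabilizer (S_{2m})_α on Ω are the sets Δ_i for 1 ≤ i ≤ ⌊m/2⌋, where Δ_i consists of those partitions {W_1, W_2} with {|V_1 ∩ W_1|, |V_1 ∩ W_2|} = {i, m-i} for α = {V_1, V_2}, and |Δ_i| = 2^{-⌊2i/m⌋}·(m!/((m-i)!·i!))². In particular S_{2m} has ⌊m/2⌋ + 1 suborbits on Ω. -/

import Mathlib

open Finset

/-- A partition of `{1,…,2m}` into `2` blocks of size `m`, encoded as a finset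
of blocks. -/
def IsHalfPartition (m : ℕ) (Pt : Finset (Finset (Fin (2 * m)))) : Prop :=
  Pt.card = 2 ∧ (∀ V ∈ Pt, V.card = m) ∧ ∀ x : Fin (2 * m), ∃ V ∈ Pt, x ∈ V

lemma exists_perm_iff_mem {α : Type*} [Fintype α] [DecidableEq α] (s t : Finset α)
    (h : s.card = t.card) : ∃ g : Equiv.Perm α, ∀ x, g x ∈ t ↔ x ∈ s := by
  have hc : sᶜ.card = tᶜ.card := by simp [Finset.card_compl, h]
  let e₁ : s ≃ t := Finset.equivOfCardEq h
  let e₂ : {x // ¬ x ∈ s} ≃ {x // ¬ x ∈ t} :=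
    (Equiv.subtypeEquivRight (fun x => (Finset.mem_compl (s := s)).symm)).trans
      ((Finset.equivOfCardEq hc).trans
        (Equiv.subtypeEquivRight (fun x => Finset.mem_compl (s := t))))
  refine ⟨(Equiv.sumCompl (· ∈ s)).symm.trans ((e₁.sumCongr e₂).trans
    (Equiv.sumCompl (· ∈ t))), fun x => ?_⟩
  by_cases hx : x ∈ s
  · rw [Equiv.trans_apply, Equiv.trans_apply,
      Equiv.sumCompl_symm_apply_of_pos hx, Equiv.sumCongr_apply, Sum.map_inl,
      Equiv.sumCompl_apply_inl]
    exact iff_of_true (e₁ ⟨x, hx⟩).2 hx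
  · rw [Equiv.trans_apply, Equiv.trans_apply,
      Equiv.sumCompl_symm_apply_of_neg hx, Equiv.sumCongr_apply, Sum.map_inr,
      Equiv.sumCompl_apply_inr]
    exact iff_of_false (e₂ ⟨x, hx⟩).2 hx

lemma exists_perm_fix_move {α : Type*} [Fintype α] [DecidableEq α]
    (V W X : Finset α) (h1 : (V ∩ W).card = (V ∩ X).card)
    (h2 : (W \ V).card = (X \ V).card) :
    ∃ g : Equiv.Perm α, (∀ x, g x ∈ V ↔ x ∈ V) ∧ (∀ x, g x ∈ X ↔ x ∈ W) := by
  have hs1 : (W.subtype (· ∈ V)).card = (X.subtype (· ∈ V)).card := by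
    rw [Finset.card_subtype, Finset.card_subtype, Finset.filter_mem_eq_inter,
      Finset.filter_mem_eq_inter, Finset.inter_comm W V, Finset.inter_comm X V, h1]
  have hs2 : (W.subtype (fun x => ¬ x ∈ V)).card = (X.subtype (fun x => ¬ x ∈ V)).card := by
    rw [Finset.card_subtype, Finset.card_subtype, ← Finset.sdiff_eq_filter,
      ← Finset.sdiff_eq_filter, h2]
  obtain ⟨σ₁, hσ₁⟩ := exists_perm_iff_mem _ _ hs1
  obtain ⟨σ₂, hσ₂⟩ := exists_perm_iff_mem _ _ hs2
  refine ⟨Equiv.Perm.subtypeCongr σ₁ σ₂, fun x => ?_, fun x => ?_⟩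
  · by_cases hx : x ∈ V
    · rw [Equiv.Perm.subtypeCongr.left_apply _ _ hx]
      exact iff_of_true (σ₁ ⟨x, hx⟩).2 hx
    · rw [Equiv.Perm.subtypeCongr.right_apply _ _ hx]
      exact iff_of_false (σ₂ ⟨x, hx⟩).2 hx
  · by_cases hx : x ∈ V
    · rw [Equiv.Perm.subtypeCongr.left_apply _ _ hx]
      have := hσ₁ ⟨x, hx⟩
      simp only [Finset.mem_subtype] at this
      exact this
    · rw [Equiv.Perm.subtypeCongr.right_apply _ _ hx]
      have := hσ₂ ⟨x, hx⟩
      simp only [Finset.mem_subtype] at this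
      exact this


lemma hp_card {m : ℕ} {β : Finset (Finset (Fin (2 * m)))} (hβ : IsHalfPartition m β)
    {W : Finset (Fin (2 * m))} (hW : W ∈ β) : W.card = m := hβ.2.1 W hW

/-- structure: a half partition is `{W, Wᶜ}`. -/
lemma hp_eq_pair {m : ℕ} {β : Finset (Finset (Fin (2 * m)))} (hβ : IsHalfPartition m β)
    {W : Finset (Fin (2 * m))} (hW : W ∈ β) : β = {W, Wᶜ} := by
  obtain ⟨a, b, hab, hβab⟩ := Finset.card_eq_two.1 hβ.1
  have hmem : ∀ x ∈ β, x = a ∨ x = b := by intro x hx; rw [hβab] at hx; simpa using hx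
  -- the two blocks are complements
  have key : b = aᶜ := by
    have ha : a ∈ β := by rw [hβab]; simp
    have hb : b ∈ β := by rw [hβab]; simp
    have hcov : ∀ x : Fin (2 * m), x ∈ a ∨ x ∈ b := by
      intro x
      obtain ⟨V, hV, hxV⟩ := hβ.2.2 x
      rcases hmem V hV with rfl | rfl
      · exact Or.inl hxV
      · exact Or.inr hxV
    have hunion : a ∪ b = univ := by
      apply Finset.eq_univ_of_forall; intro x; simpa using hcov x
    have hdisj : (a ∩ b).card = 0 := by
      have h1 := Finset.card_union_add_card_inter a b
      rw [hunion, Finset.card_univ, Fintype.card_fin, hβ.2.1 a ha, hβ.2.1 b hb] at h1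
      omega
    have hsub : b ⊆ aᶜ := by
      intro x hx
      rw [Finset.mem_compl]
      intro hxa
      have : x ∈ a ∩ b := Finset.mem_inter.2 ⟨hxa, hx⟩
      rw [Finset.card_eq_zero.1 hdisj] at this
      simp at this
    refine Finset.eq_of_subset_of_card_le hsub ?_
    rw [Finset.card_compl, Fintype.card_fin, hβ.2.1 a ha, hβ.2.1 b hb]; omega
  rcases hmem W hW with rfl | rfl
  · rw [hβab, key]
  · rw [hβab, key, compl_compl]
    exact Finset.pair_comm _ _

lemma hp_pair {m : ℕ} (hm : 0 < m) {W : Finset (Fin (2 * m))} (hWm : W.card = m) :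
    IsHalfPartition m ({W, Wᶜ} : Finset (Finset (Fin (2 * m)))) := by
  have hne : W ≠ Wᶜ := by
    obtain ⟨x, hx⟩ := Finset.card_pos.1 (hWm ▸ hm)
    intro h
    rw [h] at hx
    exact (Finset.mem_compl.1 hx) (h ▸ hx)
  refine ⟨by rw [Finset.card_pair hne], ?_, ?_⟩
  · intro V hV
    rcases Finset.mem_insert.1 hV with rfl | hV
    · exact hWm
    · rw [Finset.mem_singleton.1 hV, Finset.card_compl, Fintype.card_fin, hWm]; omega
  · intro x
    by_cases hx : x ∈ W
    · exact ⟨W, by simp, hx⟩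
    · exact ⟨Wᶜ, by simp, Finset.mem_compl.2 hx⟩

lemma inter_compl_card {m : ℕ} {V₁ : Finset (Fin (2 * m))} (hV₁m : V₁.card = m)
    (W : Finset (Fin (2 * m))) : (V₁ ∩ Wᶜ).card = m - (V₁ ∩ W).card := by
  have : V₁ ∩ Wᶜ = V₁ \ (V₁ ∩ W) := by
    ext x; simp only [Finset.mem_inter, Finset.mem_compl, Finset.mem_sdiff]; tauto
  rw [this, Finset.card_sdiff_of_subset Finset.inter_subset_left, hV₁m]

lemma inter_card_le {m : ℕ} {V₁ W : Finset (Fin (2 * m))} (hWm : W.card = m) :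
    (V₁ ∩ W).card ≤ m := by
  calc (V₁ ∩ W).card ≤ W.card := Finset.card_le_card Finset.inter_subset_right
  _ = m := hWm

/-- which intersection cards occur among blocks of a half partition -/
lemma hp_inter_cards {m : ℕ} {V₁ : Finset (Fin (2 * m))} (hV₁m : V₁.card = m)
    {β : Finset (Finset (Fin (2 * m)))} (hβ : IsHalfPartition m β)
    {W : Finset (Fin (2 * m))} (hW : W ∈ β) (j : ℕ) :
    (∃ W' ∈ β, (V₁ ∩ W').card = j) ↔ j = (V₁ ∩ W).card ∨ j = m - (V₁ ∩ W).card := by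
  rw [hp_eq_pair hβ hW]
  constructor
  · rintro ⟨W', hW', rfl⟩
    rcases Finset.mem_insert.1 hW' with rfl | hW'
    · exact Or.inl rfl
    · rw [Finset.mem_singleton.1 hW']
      exact Or.inr (inter_compl_card hV₁m W)
  · rintro (rfl | rfl)
    · exact ⟨W, by simp, rfl⟩
    · exact ⟨Wᶜ, by simp, (inter_compl_card hV₁m W)⟩

lemma image_eq_of_iff {α : Type*} [DecidableEq α] (g : Equiv.Perm α) (s t : Finset α)
    (h : ∀ x, g x ∈ t ↔ x ∈ s) (hc : s.card = t.card) : s.image g = t := by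
  apply Finset.eq_of_subset_of_card_le
  · intro y hy
    obtain ⟨x, hx, rfl⟩ := Finset.mem_image.1 hy
    exact (h x).2 hx
  · rw [Finset.card_image_of_injective _ g.injective, hc]

lemma orbit_iff {m : ℕ} {α : Finset (Finset (Fin (2 * m)))} (hα : IsHalfPartition m α)
    {V₁ : Finset (Fin (2 * m))} (hV₁ : V₁ ∈ α)
    (β γ : Finset (Finset (Fin (2 * m))))
    (hβ : IsHalfPartition m β) (hγ : IsHalfPartition m γ) :
    (∃ g : Equiv.Perm (Fin (2 * m)),
        α.image (fun V => V.image g) = α ∧ β.image (fun V => V.image g) = γ) ↔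
      ∃ j, (∃ W ∈ β, (V₁ ∩ W).card = j) ∧ ∃ W ∈ γ, (V₁ ∩ W).card = j := by
  have hV₁m : V₁.card = m := hα.2.1 V₁ hV₁
  constructor
  · rintro ⟨g, hgα, hgβ⟩
    obtain ⟨W₁, hW₁⟩ := Finset.card_pos.1 (by rw [hβ.1]; omega)
    have hjle : (V₁ ∩ W₁).card ≤ m := inter_card_le (hp_card hβ hW₁)
    have hX : W₁.image g ∈ γ := hgβ ▸ Finset.mem_image_of_mem _ hW₁
    have hfV₁ : V₁.image g ∈ α := hgα ▸ Finset.mem_image_of_mem _ hV₁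
    rw [hp_eq_pair hα hV₁, Finset.mem_insert, Finset.mem_singleton] at hfV₁
    rcases hfV₁ with h | h
    · refine ⟨(V₁ ∩ W₁).card, ⟨W₁, hW₁, rfl⟩, ⟨W₁.image g, hX, ?_⟩⟩
      have he : V₁ ∩ W₁.image g = (V₁ ∩ W₁).image g := by
        rw [Finset.image_inter _ _ g.injective, h]
      rw [he, Finset.card_image_of_injective _ g.injective]
    · have hc : (V₁ᶜ ∩ W₁.image g).card = (V₁ ∩ W₁).card := by
        rw [← h, ← Finset.image_inter _ _ g.injective,
          Finset.card_image_of_injective _ g.injective]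
      have hXm : (W₁.image g).card = m := hp_card hγ hX
      have hsd : W₁.image g \ V₁ = V₁ᶜ ∩ W₁.image g := by
        ext x; simp only [Finset.mem_sdiff, Finset.mem_inter, Finset.mem_compl]; tauto
      have h2 := Finset.card_inter_add_card_sdiff (W₁.image g) V₁
      rw [hsd, hc, hXm] at h2
      have hVX : (V₁ ∩ W₁.image g).card = m - (V₁ ∩ W₁).card := by
        rw [Finset.inter_comm]; omega
      refine ⟨(V₁ ∩ W₁).card, ⟨W₁, hW₁, rfl⟩, ?_⟩
      rw [hp_inter_cards hV₁m hγ hX]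
      right; omega
  · rintro ⟨j, ⟨Wβ, hWβ, hjβ⟩, ⟨Wγ, hWγ, hjγ⟩⟩
    have hWβm : Wβ.card = m := hp_card hβ hWβ
    have hWγm : Wγ.card = m := hp_card hγ hWγ
    have hjle : j ≤ m := hjβ ▸ inter_card_le hWβm
    have h2 : (Wβ \ V₁).card = (Wγ \ V₁).card := by
      have e1 := Finset.card_inter_add_card_sdiff Wβ V₁
      have e2 := Finset.card_inter_add_card_sdiff Wγ V₁
      rw [Finset.inter_comm, hjβ, hWβm] at e1
      rw [Finset.inter_comm, hjγ, hWγm] at e2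
      omega
    obtain ⟨g, hgV, hgX⟩ := exists_perm_fix_move V₁ Wβ Wγ (by rw [hjβ, hjγ]) h2
    have hV₁im : V₁.image g = V₁ := image_eq_of_iff g V₁ V₁ hgV rfl
    have hV₁cim : V₁ᶜ.image g = V₁ᶜ :=
      image_eq_of_iff g _ _
        (fun x => by simp only [Finset.mem_compl]; exact not_congr (hgV x)) rfl
    have hWim : Wβ.image g = Wγ := image_eq_of_iff g _ _ hgX (by rw [hWβm, hWγm])
    have hWcim : Wβᶜ.image g = Wγᶜ :=
      image_eq_of_iff g _ _
        (fun x => by simp only [Finset.mem_compl]; exact not_congr (hgX x))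
        (by rw [Finset.card_compl, Finset.card_compl, hWβm, hWγm])
    refine ⟨g, ?_, ?_⟩
    · rw [hp_eq_pair hα hV₁]
      simp only [Finset.image_insert, Finset.image_singleton, hV₁im, hV₁cim]
    · rw [hp_eq_pair hβ hWβ, hp_eq_pair hγ hWγ]
      simp only [Finset.image_insert, Finset.image_singleton, hWim, hWcim]

lemma count_lemma {m : ℕ} (hm : 0 < m) {V₁ : Finset (Fin (2 * m))} (hV₁m : V₁.card = m)
    (i : ℕ) (hi2 : i ≤ m / 2) :
    {Pt | IsHalfPartition m Pt ∧ ∃ W ∈ Pt, (V₁ ∩ W).card = i}.ncard * 2 ^ ((2 * i) / m)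
      = (Nat.choose m i) ^ 2 := by
  classical
  set Tf : Finset (Finset (Finset (Fin (2 * m)))) :=
    univ.filter (fun Pt => IsHalfPartition m Pt ∧ ∃ W ∈ Pt, (V₁ ∩ W).card = i) with hTf
  have hset : {Pt | IsHalfPartition m Pt ∧ ∃ W ∈ Pt, (V₁ ∩ W).card = i} = ↑Tf := by
    ext Pt; simp [hTf]
  rw [hset, Set.ncard_coe_finset]
  set S : Finset (Finset (Fin (2 * m))) :=
    univ.filter (fun W => W.card = m ∧ (V₁ ∩ W).card = i) with hS
  have hVc : V₁ᶜ.card = m := by rw [Finset.card_compl, Fintype.card_fin, hV₁m]; omega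
  have him : i ≤ m := le_trans hi2 (Nat.div_le_self m 2)
  have h2i : 2 * i ≤ m := by omega
  -- card of S
  have hScard : S.card = (Nat.choose m i) ^ 2 := by
    have hb := Finset.card_bij' (s := S)
      (t := Finset.powersetCard i V₁ ×ˢ Finset.powersetCard (m - i) V₁ᶜ)
      (fun W _ => (W ∩ V₁, W \ V₁)) (fun p _ => p.1 ∪ p.2) ?_ ?_ ?_ ?_
    · rw [hb, Finset.card_product, Finset.card_powersetCard, Finset.card_powersetCard,
        hV₁m, hVc, Nat.choose_symm him, sq]
    · intro W hW
      rw [hS, Finset.mem_filter] at hW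
      obtain ⟨-, hWm, hWi⟩ := hW
      have hsd := Finset.card_inter_add_card_sdiff W V₁
      rw [Finset.mem_product, Finset.mem_powersetCard, Finset.mem_powersetCard]
      refine ⟨⟨Finset.inter_subset_right, by rw [Finset.inter_comm]; exact hWi⟩,
        fun x hx => Finset.mem_compl.2 (Finset.mem_sdiff.1 hx).2, ?_⟩
      show (W \ V₁).card = m - i
      rw [Finset.inter_comm] at hsd
      omega
    · rintro ⟨A, B⟩ hp
      dsimp only
      rw [Finset.mem_product, Finset.mem_powersetCard, Finset.mem_powersetCard] at hp
      obtain ⟨⟨hAV, hAc⟩, hBV, hBc⟩ := hp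
      have hdisj : Disjoint A B := by
        rw [Finset.disjoint_left]
        intro x hxA hxB
        exact Finset.mem_compl.1 (hBV hxB) (hAV hxA)
      rw [hS, Finset.mem_filter]
      refine ⟨Finset.mem_univ _, ?_, ?_⟩
      · rw [Finset.card_union_of_disjoint hdisj, hAc, hBc]; omega
      · have : V₁ ∩ (A ∪ B) = A := by
          ext x
          simp only [Finset.mem_inter, Finset.mem_union]
          constructor
          · rintro ⟨hxV, hx | hx⟩
            · exact hx
            · exact absurd hxV (Finset.mem_compl.1 (hBV hx))
          · intro hx; exact ⟨hAV hx, Or.inl hx⟩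
        rw [this, hAc]
    · intro W hW
      dsimp only
      ext x
      simp only [Finset.mem_union, Finset.mem_inter, Finset.mem_sdiff]
      tauto
    · rintro ⟨A, B⟩ hp
      dsimp only
      rw [Finset.mem_product, Finset.mem_powersetCard, Finset.mem_powersetCard] at hp
      obtain ⟨⟨hAV, hAc⟩, hBV, hBc⟩ := hp
      have h1 : (A ∪ B) ∩ V₁ = A := by
        ext x
        simp only [Finset.mem_inter, Finset.mem_union]
        constructor
        · rintro ⟨hx | hx, hxV⟩
          · exact hx
          · exact absurd hxV (Finset.mem_compl.1 (hBV hx))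
        · intro hx; exact ⟨Or.inl hx, hAV hx⟩
      have h2 : (A ∪ B) \ V₁ = B := by
        ext x
        simp only [Finset.mem_sdiff, Finset.mem_union]
        constructor
        · rintro ⟨hx | hx, hxV⟩
          · exact absurd (hAV hx) hxV
          · exact hx
        · intro hx; exact ⟨Or.inr hx, Finset.mem_compl.1 (hBV hx)⟩
      simp only [h1, h2]
  -- fiberwise count
  have hmap : ∀ W ∈ S, ({W, Wᶜ} : Finset (Finset (Fin (2 * m)))) ∈ Tf := by
    intro W hW
    rw [hS, Finset.mem_filter] at hW
    rw [hTf, Finset.mem_filter]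
    exact ⟨Finset.mem_univ _, hp_pair hm hW.2.1, W, by simp, hW.2.2⟩
  have hsum := Finset.card_eq_sum_card_fiberwise hmap
  have hfiber : ∀ Pt ∈ Tf,
      (S.filter (fun W => ({W, Wᶜ} : Finset (Finset (Fin (2 * m)))) = Pt)).card
        = 2 ^ ((2 * i) / m) := by
    intro Pt hPt
    rw [hTf, Finset.mem_filter] at hPt
    obtain ⟨-, hPth, W₀, hW₀, hW₀i⟩ := hPt
    have hW₀m : W₀.card = m := hp_card hPth hW₀
    have hPtpair : Pt = {W₀, W₀ᶜ} := hp_eq_pair hPth hW₀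
    have hW₀ne : W₀ ≠ W₀ᶜ := by
      obtain ⟨x, hx⟩ := Finset.card_pos.1 (hW₀m ▸ hm)
      intro h; exact (Finset.mem_compl.1 (h ▸ hx)) hx
    have hpairiff : ∀ W : Finset (Fin (2 * m)),
        ({W, Wᶜ} : Finset (Finset (Fin (2 * m)))) = Pt ↔ W = W₀ ∨ W = W₀ᶜ := by
      intro W
      rw [hPtpair]
      constructor
      · intro h
        have : W ∈ ({W₀, W₀ᶜ} : Finset (Finset (Fin (2 * m)))) := by
          rw [← h]; simp
        simpa using this
      · rintro (rfl | rfl)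
        · rfl
        · rw [compl_compl]; exact Finset.pair_comm _ _
    by_cases hcase : 2 * i = m
    · -- fiber is {W₀, W₀ᶜ}
      have : S.filter (fun W => ({W, Wᶜ} : Finset (Finset (Fin (2 * m)))) = Pt)
          = {W₀, W₀ᶜ} := by
        ext W
        rw [Finset.mem_filter, hS, Finset.mem_filter, hpairiff]
        simp only [Finset.mem_univ, true_and, Finset.mem_insert, Finset.mem_singleton]
        constructor
        · rintro ⟨-, h⟩; exact h
        · rintro (rfl | rfl)
          · exact ⟨⟨hW₀m, hW₀i⟩, Or.inl rfl⟩
          · refine ⟨⟨?_, ?_⟩, Or.inr rfl⟩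
            · rw [Finset.card_compl, Fintype.card_fin, hW₀m]; omega
            · rw [inter_compl_card hV₁m, hW₀i]; omega
      rw [this, Finset.card_pair hW₀ne]
      have : (2 * i) / m = 1 := by rw [hcase, Nat.div_self hm]
      rw [this]; rfl
    · -- fiber is {W₀}
      have : S.filter (fun W => ({W, Wᶜ} : Finset (Finset (Fin (2 * m)))) = Pt)
          = {W₀} := by
        ext W
        rw [Finset.mem_filter, hS, Finset.mem_filter, hpairiff]
        simp only [Finset.mem_univ, true_and, Finset.mem_singleton]
        constructor
        · rintro ⟨⟨-, hWi⟩, (rfl | rfl)⟩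
          · rfl
          · exfalso
            rw [inter_compl_card hV₁m, hW₀i] at hWi
            omega
        · rintro rfl
          exact ⟨⟨hW₀m, hW₀i⟩, Or.inl rfl⟩
      rw [this, Finset.card_singleton]
      have : (2 * i) / m = 0 := Nat.div_eq_of_lt (by omega)
      rw [this]; rfl
  rw [Finset.sum_congr rfl hfiber, Finset.sum_const, smul_eq_mul] at hsum
  rw [← hScard, hsum]

lemma exists_block {m : ℕ} {V₁ : Finset (Fin (2 * m))} (hV₁m : V₁.card = m)
    (j : ℕ) (hj : j ≤ m) :
    ∃ W : Finset (Fin (2 * m)), W.card = m ∧ (V₁ ∩ W).card = j := by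
  have hVc : V₁ᶜ.card = m := by rw [Finset.card_compl, Fintype.card_fin, hV₁m]; omega
  obtain ⟨A, hAV, hAc⟩ := Finset.exists_subset_card_eq (show j ≤ V₁.card by omega)
  obtain ⟨B, hBV, hBc⟩ := Finset.exists_subset_card_eq (show m - j ≤ V₁ᶜ.card by omega)
  have hdisj : Disjoint A B := by
    rw [Finset.disjoint_left]
    intro x hxA hxB
    exact Finset.mem_compl.1 (hBV hxB) (hAV hxA)
  have hint : V₁ ∩ (A ∪ B) = A := by
    ext x
    simp only [Finset.mem_inter, Finset.mem_union]
    constructor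
    · rintro ⟨hxV, hx | hx⟩
      · exact hx
      · exact absurd hxV (Finset.mem_compl.1 (hBV hx))
    · intro hx; exact ⟨hAV hx, Or.inl hx⟩
  refine ⟨A ∪ B, ?_, by rw [hint, hAc]⟩
  rw [Finset.card_union_of_disjoint hdisj, hAc, hBc]; omega

lemma orbit_eq {m : ℕ} {α : Finset (Finset (Fin (2 * m)))} (hα : IsHalfPartition m α)
    {V₁ : Finset (Fin (2 * m))} (hV₁ : V₁ ∈ α)
    {β : Finset (Finset (Fin (2 * m)))} (hβ : IsHalfPartition m β)
    {W : Finset (Fin (2 * m))} (hW : W ∈ β) (hj : 2 * (V₁ ∩ W).card ≤ m) :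
    {γ | IsHalfPartition m γ ∧ ∃ g : Equiv.Perm (Fin (2 * m)),
        α.image (fun V => V.image g) = α ∧ β.image (fun V => V.image g) = γ}
      = {γ | IsHalfPartition m γ ∧ ∃ W' ∈ γ, (V₁ ∩ W').card = (V₁ ∩ W).card} := by
  have hV₁m : V₁.card = m := hα.2.1 V₁ hV₁
  have ha : (V₁ ∩ W).card ≤ m := inter_card_le (hp_card hβ hW)
  ext γ
  simp only [Set.mem_setOf_eq]
  refine and_congr_right fun hγ => ?_
  rw [orbit_iff hα hV₁ β γ hβ hγ]
  constructor
  · rintro ⟨j, hjβ, hjγ⟩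
    rw [hp_inter_cards hV₁m hβ hW] at hjβ
    obtain ⟨W', hW', hW'j⟩ := hjγ
    have hb : (V₁ ∩ W').card ≤ m := inter_card_le (hp_card hγ hW')
    rw [hp_inter_cards hV₁m hγ hW']
    omega
  · rintro ⟨W', hW', hW'a⟩
    exact ⟨(V₁ ∩ W).card, ⟨W, hW, rfl⟩, W', hW', hW'a⟩

lemma orbit_count {m : ℕ} (hm : 0 < m) {α : Finset (Finset (Fin (2 * m)))}
    (hα : IsHalfPartition m α) {V₁ : Finset (Fin (2 * m))} (hV₁ : V₁ ∈ α) :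
    {S : Set (Finset (Finset (Fin (2 * m)))) |
      ∃ β, IsHalfPartition m β ∧
        S = {γ | IsHalfPartition m γ ∧ ∃ g : Equiv.Perm (Fin (2 * m)),
          α.image (fun V => V.image g) = α ∧ β.image (fun V => V.image g) = γ}}.ncard
      = m / 2 + 1 := by
  have hV₁m : V₁.card = m := hα.2.1 V₁ hV₁
  set O : ℕ → Set (Finset (Finset (Fin (2 * m)))) :=
    fun j => {γ | IsHalfPartition m γ ∧ ∃ W ∈ γ, (V₁ ∩ W).card = j} with hO
  have key : {S : Set (Finset (Finset (Fin (2 * m)))) |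
      ∃ β, IsHalfPartition m β ∧
        S = {γ | IsHalfPartition m γ ∧ ∃ g : Equiv.Perm (Fin (2 * m)),
          α.image (fun V => V.image g) = α ∧ β.image (fun V => V.image g) = γ}}
      = O '' (Set.Iic (m / 2)) := by
    ext S
    simp only [Set.mem_setOf_eq, Set.mem_image, Set.mem_Iic]
    constructor
    · rintro ⟨β, hβ, rfl⟩
      obtain ⟨W, hW⟩ := Finset.card_pos.1 (by rw [hβ.1]; omega)
      have ha : (V₁ ∩ W).card ≤ m := inter_card_le (hp_card hβ hW)
      by_cases hle : 2 * (V₁ ∩ W).card ≤ m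
      · exact ⟨(V₁ ∩ W).card, by omega, (orbit_eq hα hV₁ hβ hW hle).symm⟩
      · have hWc : Wᶜ ∈ β := by
          rw [hp_eq_pair hβ hW]; simp
        refine ⟨m - (V₁ ∩ W).card, by omega, ?_⟩
        have h1 : (V₁ ∩ Wᶜ).card = m - (V₁ ∩ W).card := inter_compl_card hV₁m W
        have h2 := orbit_eq hα hV₁ hβ hWc (by rw [h1]; omega)
        rw [← h1]
        exact h2.symm
    · rintro ⟨j, hj, rfl⟩
      obtain ⟨W, hWm, hWj⟩ := exists_block hV₁m j (le_trans hj (Nat.div_le_self _ _))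
      have hWmem : W ∈ ({W, Wᶜ} : Finset (Finset (Fin (2 * m)))) := by simp
      refine ⟨{W, Wᶜ}, hp_pair hm hWm, ?_⟩
      have h2 := orbit_eq hα hV₁ (hp_pair hm hWm) hWmem (by rw [hWj]; omega)
      rw [h2, hWj]
  rw [key, Set.ncard_image_of_injOn, ← Finset.coe_Iic, Set.ncard_coe_finset, Nat.card_Iic]
  -- injectivity
  intro j₁ hj₁ j₂ hj₂ hOeq
  simp only [Set.mem_Iic] at hj₁ hj₂
  obtain ⟨W, hWm, hWj⟩ := exists_block hV₁m j₁ (le_trans hj₁ (Nat.div_le_self _ _))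
  have hγ1 : ({W, Wᶜ} : Finset (Finset (Fin (2 * m)))) ∈ O j₁ :=
    ⟨hp_pair hm hWm, W, by simp, hWj⟩
  rw [hOeq] at hγ1
  obtain ⟨hhp, hex⟩ := hγ1
  rw [hp_inter_cards hV₁m hhp (show W ∈ ({W, Wᶜ} : Finset (Finset (Fin (2 * m)))) by simp),
    hWj] at hex
  omega

/-- Suborbits of `S_{2m}` (`m ≥ 3`) acting on partitions of `{1,…,2m}` into two
blocks of size `m`: the nontrivial orbits of the stabilizer of `α = {V₁,V₂}` are
the sets `Δ_i` (`1 ≤ i ≤ ⌊m/2⌋`) of partitions `{W₁,W₂}` with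
`{|V₁∩W₁|,|V₁∩W₂|} = {i,m-i}`, of size `2^{-⌊2i/m⌋}·C(m,i)²`; in particular
there are `⌊m/2⌋ + 1` suborbits. -/
theorem symmetric_half_partitions_suborbits
    (m : ℕ) (hm : 3 ≤ m)
    (α : Finset (Finset (Fin (2 * m)))) (hα : IsHalfPartition m α)
    (V₁ : Finset (Fin (2 * m))) (hV₁ : V₁ ∈ α) :
    (∀ i, 1 ≤ i → i ≤ m / 2 →
      {Pt | IsHalfPartition m Pt ∧ ∃ W ∈ Pt, (V₁ ∩ W).card = i}.ncard *
          2 ^ ((2 * i) / m) = (Nat.choose m i) ^ 2) ∧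
    (∀ β γ : Finset (Finset (Fin (2 * m))),
      IsHalfPartition m β → IsHalfPartition m γ →
      ((∃ g : Equiv.Perm (Fin (2 * m)),
          α.image (fun V => V.image g) = α ∧ β.image (fun V => V.image g) = γ) ↔
        ∃ j, (∃ W ∈ β, (V₁ ∩ W).card = j) ∧ ∃ W ∈ γ, (V₁ ∩ W).card = j)) ∧
    {S : Set (Finset (Finset (Fin (2 * m)))) |
      ∃ β, IsHalfPartition m β ∧
        S = {γ | IsHalfPartition m γ ∧ ∃ g : Equiv.Perm (Fin (2 * m)),
          α.image (fun V => V.image g) = α ∧ β.image (fun V => V.image g) = γ}}.ncard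
      = m / 2 + 1 := by
  have hm0 : 0 < m := by omega
  have hV₁m : V₁.card = m := hα.2.1 V₁ hV₁
  exact ⟨fun i _ hi2 => count_lemma hm0 hV₁m i hi2,
    fun β γ hβ hγ => orbit_iff hα hV₁ β γ hβ hγ,
    orbit_count hm0 hα hV₁⟩
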